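/- arXiv:2006.06783 — 5 statements merged into one kernel-verified Lean document; each statement's English description precedes it below -/
import Mathlib

section
/- Let U and V be real random variables supported on [μ - Δ, μ + Δ]. Suppose that for all measurable events E, P[U ∈ E] ≤ e^ε P[V ∈ E] + δ and P[V ∈ E] ≤ e^ε P[U ∈ E] + δ. Then |E[U] - E[V]| ≤ (e^ε - 1)·E[|U - μ|] + 2δΔ. -/
open MeasureTheory

namespace Stmt4Aux

variable {Ω : Type*} [MeasurableSpace Ω] (P : Measure Ω) [IsProbabilityMeasure P]

lemma tail_antitone (f : Ω → ℝ) :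
    Antitone (fun t => (P {a | t < f a}).toReal) := by
  intro s t hst
  exact ENNReal.toReal_mono (measure_ne_top _ _)
    (measure_mono (fun a ha => lt_of_le_of_lt hst ha))

omit [IsProbabilityMeasure P] in
lemma tail_zero {f : Ω → ℝ} {Δ : ℝ} (hb : ∀ᵐ ω ∂P, f ω ≤ Δ) {t : ℝ} (ht : Δ < t) :
    P {a | t < f a} = 0 := by
  refine measure_mono_null (fun a (ha : t < f a) => ?_) (ae_iff.1 hb)
  exact not_le.2 (ht.trans ha)

lemma tail_integrableOn {f : Ω → ℝ} {Δ : ℝ} (hb : ∀ᵐ ω ∂P, f ω ≤ Δ) :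
    IntegrableOn (fun t => (P {a | t < f a}).toReal) (Set.Ioi 0) := by
  have hmeas : Measurable (fun t => (P {a | t < f a}).toReal) :=
    (tail_antitone P f).measurable
  have hg : Integrable ((Set.Ioc (0:ℝ) Δ).indicator (fun _ => (1:ℝ))) :=
    (integrable_indicator_iff measurableSet_Ioc).2
      (integrableOn_const measure_Ioc_lt_top.ne (by simp))
  refine Integrable.mono' hg.integrableOn hmeas.aestronglyMeasurable
    (((ae_restrict_iff' measurableSet_Ioi).2 (Filter.Eventually.of_forall fun t ht => ?_)))
  rw [Real.norm_eq_abs, abs_of_nonneg ENNReal.toReal_nonneg]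
  by_cases htΔ : t ≤ Δ
  · rw [Set.indicator_of_mem (show t ∈ Set.Ioc (0:ℝ) Δ from ⟨ht, htΔ⟩)]
    exact ENNReal.toReal_le_of_le_ofReal zero_le_one (by simpa using prob_le_one)
  · rw [Set.indicator_of_notMem (fun h => htΔ h.2), tail_zero P hb (not_le.1 htΔ)]
    simp

lemma bdd_integrable {f : Ω → ℝ} (hf : AEStronglyMeasurable f P) {C : ℝ}
    (h : ∀ᵐ ω ∂P, |f ω| ≤ C) : Integrable f P := by
  refine Integrable.mono' (integrable_const C) hf ?_
  filter_upwards [h] with ω hω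
  rwa [Real.norm_eq_abs]

lemma pos_part_integrable {f : Ω → ℝ} (hf : Measurable f) {Δ : ℝ}
    (hb : ∀ᵐ ω ∂P, f ω ≤ Δ) : Integrable (fun ω => max (f ω) 0) P := by
  refine bdd_integrable P (hf.max measurable_const).aestronglyMeasurable (C := max Δ 0) ?_
  filter_upwards [hb] with ω h
  rw [abs_of_nonneg (le_max_right _ _)]
  exact max_le_max h le_rfl

lemma layer {f : Ω → ℝ} (hf : Measurable f) {Δ : ℝ} (hb : ∀ᵐ ω ∂P, f ω ≤ Δ) :
    ∫ ω, max (f ω) 0 ∂P = ∫ t in Set.Ioi 0, (P {a | t < f a}).toReal := by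
  have hint : Integrable (fun ω => max (f ω) 0) P := by
    refine bdd_integrable P (hf.max measurable_const).aestronglyMeasurable
      (C := max Δ 0) ?_
    filter_upwards [hb] with ω h
    rw [abs_of_nonneg (le_max_right _ _)]
    exact max_le_max h le_rfl
  rw [hint.integral_eq_integral_meas_lt
    (Filter.Eventually.of_forall fun ω => le_max_right _ _)]
  refine setIntegral_congr_fun measurableSet_Ioi (fun t ht => ?_)
  congr 2
  ext a
  simp only [Set.mem_setOf_eq, lt_max_iff]
  exact or_iff_left (not_lt.2 (le_of_lt ht))

lemma arith {a b e d : ℝ} (he : 1 ≤ e) (ha : 0 ≤ a) (hb : 0 ≤ b) (hd : 0 ≤ d)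
    (h : a ≤ e * b + d) : a - b ≤ (e - 1) * a + d := by
  rcases le_or_gt a b with h' | h'
  · nlinarith
  · nlinarith [mul_nonneg (sub_nonneg.2 he) (sub_nonneg.2 h'.le)]

end Stmt4Aux

open Stmt4Aux in
/-- If `U` and `V` are random variables supported on `[μ - Δ, μ + Δ]` satisfying
`(ε, δ)`-indistinguishability (`P[U ∈ E] ≤ e^ε P[V ∈ E] + δ` and symmetrically, for all
measurable events `E`), then `|E[U] - E[V]| ≤ (e^ε - 1)·E[|U - μ|] + 2δΔ`. -/
theorem stmt4 {Ω₁ Ω₂ : Type*} [MeasureSpace Ω₁] [MeasureSpace Ω₂]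
    [IsProbabilityMeasure (volume : Measure Ω₁)] [IsProbabilityMeasure (volume : Measure Ω₂)]
    (U : Ω₁ → ℝ) (V : Ω₂ → ℝ) (hU : Measurable U) (hV : Measurable V)
    (ε δ Δ μ : ℝ) (hε : 0 ≤ ε) (hδ : 0 ≤ δ) (hΔ : 0 ≤ Δ)
    (hUsupp : ∀ᵐ ω, U ω ∈ Set.Icc (μ - Δ) (μ + Δ))
    (hVsupp : ∀ᵐ ω, V ω ∈ Set.Icc (μ - Δ) (μ + Δ))
    (hUV : ∀ E : Set ℝ, MeasurableSet E →
      ((volume : Measure Ω₁) (U ⁻¹' E)).toReal ≤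
        Real.exp ε * ((volume : Measure Ω₂) (V ⁻¹' E)).toReal + δ)
    (hVU : ∀ E : Set ℝ, MeasurableSet E →
      ((volume : Measure Ω₂) (V ⁻¹' E)).toReal ≤
        Real.exp ε * ((volume : Measure Ω₁) (U ⁻¹' E)).toReal + δ) :
    |(∫ ω, U ω) - ∫ ω, V ω| ≤ (Real.exp ε - 1) * (∫ ω, |U ω - μ|) + 2 * δ * Δ := by
  set P1 : Measure Ω₁ := volume
  set P2 : Measure Ω₂ := volume
  set e : ℝ := Real.exp ε with he_def
  have he : 1 ≤ e := Real.one_le_exp hε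
  set A : ℝ → ℝ := fun t => (P1 {a | t < U a - μ}).toReal with hA_def
  set A' : ℝ → ℝ := fun t => (P1 {a | t < μ - U a}).toReal with hA'_def
  set B : ℝ → ℝ := fun t => (P2 {a | t < V a - μ}).toReal with hB_def
  set B' : ℝ → ℝ := fun t => (P2 {a | t < μ - V a}).toReal with hB'_def
  set Aa : ℝ → ℝ := fun t => (P1 {a | t < |U a - μ|}).toReal with hAa_def
  -- a.e. bounds
  have hU1 : ∀ᵐ ω ∂P1, U ω - μ ≤ Δ := by filter_upwards [hUsupp] with ω h; linarith [h.2]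
  have hU2 : ∀ᵐ ω ∂P1, μ - U ω ≤ Δ := by filter_upwards [hUsupp] with ω h; linarith [h.1]
  have hU3 : ∀ᵐ ω ∂P1, |U ω - μ| ≤ Δ := by
    filter_upwards [hUsupp] with ω h
    exact abs_le.2 ⟨by linarith [h.1], by linarith [h.2]⟩
  have hV1 : ∀ᵐ ω ∂P2, V ω - μ ≤ Δ := by filter_upwards [hVsupp] with ω h; linarith [h.2]
  have hV2 : ∀ᵐ ω ∂P2, μ - V ω ≤ Δ := by filter_upwards [hVsupp] with ω h; linarith [h.1]
  -- integrability of U, V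
  have hUint : Integrable U P1 := by
    refine bdd_integrable P1 hU.aestronglyMeasurable (C := |μ| + Δ) ?_
    filter_upwards [hUsupp] with ω h
    exact abs_le.2 ⟨by linarith [h.1, neg_abs_le μ], by linarith [h.2, le_abs_self μ]⟩
  have hVint : Integrable V P2 := by
    refine bdd_integrable P2 hV.aestronglyMeasurable (C := |μ| + Δ) ?_
    filter_upwards [hVsupp] with ω h
    exact abs_le.2 ⟨by linarith [h.1, neg_abs_le μ], by linarith [h.2, le_abs_self μ]⟩
  -- representations via layer cake
  have hEU : (∫ ω, U ω ∂P1) - μ =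
      (∫ t in Set.Ioi 0, A t) - ∫ t in Set.Ioi 0, A' t := by
    have h1 := layer P1 (f := fun ω => U ω - μ) (hU.sub measurable_const) hU1
    have h2 := layer P1 (f := fun ω => μ - U ω) (measurable_const.sub hU) hU2
    have hi1 := pos_part_integrable P1 (f := fun ω => U ω - μ) (hU.sub measurable_const) hU1
    have hi2 := pos_part_integrable P1 (f := fun ω => μ - U ω) (measurable_const.sub hU) hU2
    have key : ∫ ω, (U ω - μ) ∂P1 =
        ∫ ω, (max (U ω - μ) 0 - max (μ - U ω) 0) ∂P1 := by
      refine integral_congr_ae (Filter.Eventually.of_forall fun ω => ?_)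
      show U ω - μ = max (U ω - μ) 0 - max (μ - U ω) 0
      rw [show μ - U ω = -(U ω - μ) by ring, max_zero_sub_max_neg_zero_eq_self]
    rw [integral_sub hUint (integrable_const μ), integral_const] at key
    simp only [measure_univ, probReal_univ, ENNReal.toReal_one, one_smul] at key
    rw [integral_sub hi1 hi2] at key
    rw [key, h1, h2]
  have hEV : (∫ ω, V ω ∂P2) - μ =
      (∫ t in Set.Ioi 0, B t) - ∫ t in Set.Ioi 0, B' t := by
    have h1 := layer P2 (f := fun ω => V ω - μ) (hV.sub measurable_const) hV1
    have h2 := layer P2 (f := fun ω => μ - V ω) (measurable_const.sub hV) hV2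
    have hi1 := pos_part_integrable P2 (f := fun ω => V ω - μ) (hV.sub measurable_const) hV1
    have hi2 := pos_part_integrable P2 (f := fun ω => μ - V ω) (measurable_const.sub hV) hV2
    have key : ∫ ω, (V ω - μ) ∂P2 =
        ∫ ω, (max (V ω - μ) 0 - max (μ - V ω) 0) ∂P2 := by
      refine integral_congr_ae (Filter.Eventually.of_forall fun ω => ?_)
      show V ω - μ = max (V ω - μ) 0 - max (μ - V ω) 0
      rw [show μ - V ω = -(V ω - μ) by ring, max_zero_sub_max_neg_zero_eq_self]
    rw [integral_sub hVint (integrable_const μ), integral_const] at key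
    simp only [measure_univ, probReal_univ, ENNReal.toReal_one, one_smul] at key
    rw [integral_sub hi1 hi2] at key
    rw [key, h1, h2]
  have hAbs : (∫ ω, |U ω - μ| ∂P1) = ∫ t in Set.Ioi 0, Aa t := by
    have h1 := layer P1 (f := fun ω => |U ω - μ|) (hU.sub measurable_const).abs hU3
    rw [← h1]
    refine integral_congr_ae (Filter.Eventually.of_forall fun ω => ?_)
    exact (max_eq_left (abs_nonneg _)).symm
  -- integrability on Ioi 0
  have iA : IntegrableOn A (Set.Ioi 0) := tail_integrableOn P1 hU1
  have iA' : IntegrableOn A' (Set.Ioi 0) := tail_integrableOn P1 hU2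
  have iB : IntegrableOn B (Set.Ioi 0) := tail_integrableOn P2 hV1
  have iB' : IntegrableOn B' (Set.Ioi 0) := tail_integrableOn P2 hV2
  have iAa : IntegrableOn Aa (Set.Ioi 0) := tail_integrableOn P1 hU3
  -- difference as a single integral
  have hD : (∫ ω, U ω ∂P1) - ∫ ω, V ω ∂P2 =
      ∫ t in Set.Ioi 0, (A t - B t + (B' t - A' t)) := by
    rw [integral_add (f := fun t => A t - B t) (g := fun t => B' t - A' t)
      (iA.sub iB) (iB'.sub iA'),
      integral_sub (f := fun t => A t) (g := fun t => B t) iA iB,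
      integral_sub (f := fun t => B' t) (g := fun t => A' t) iB' iA']
    linarith [hEU, hEV]
  -- pointwise bounds
  have hAB : ∀ t : ℝ, |A t - B t| ≤ (e - 1) * A t + δ := by
    intro t
    have h1 := hUV (Set.Ioi (μ + t)) measurableSet_Ioi
    have h2 := hVU (Set.Ioi (μ + t)) measurableSet_Ioi
    have hs1 : U ⁻¹' Set.Ioi (μ + t) = {a | t < U a - μ} := by
      ext a; simp only [Set.mem_preimage, Set.mem_Ioi, Set.mem_setOf_eq]
      constructor <;> intro <;> linarith
    have hs2 : V ⁻¹' Set.Ioi (μ + t) = {a | t < V a - μ} := by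
      ext a; simp only [Set.mem_preimage, Set.mem_Ioi, Set.mem_setOf_eq]
      constructor <;> intro <;> linarith
    rw [hs1, hs2] at h1 h2
    refine abs_sub_le_iff.2 ⟨?_, ?_⟩
    · exact arith he ENNReal.toReal_nonneg ENNReal.toReal_nonneg hδ h1
    · simp only [hA_def, hB_def]; nlinarith [ENNReal.toReal_nonneg (a := P1 {a | t < U a - μ})]
  have hA'B' : ∀ t : ℝ, |A' t - B' t| ≤ (e - 1) * A' t + δ := by
    intro t
    have h1 := hUV (Set.Iio (μ - t)) measurableSet_Iio
    have h2 := hVU (Set.Iio (μ - t)) measurableSet_Iio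
    have hs1 : U ⁻¹' Set.Iio (μ - t) = {a | t < μ - U a} := by
      ext a; simp only [Set.mem_preimage, Set.mem_Iio, Set.mem_setOf_eq]
      constructor <;> intro <;> linarith
    have hs2 : V ⁻¹' Set.Iio (μ - t) = {a | t < μ - V a} := by
      ext a; simp only [Set.mem_preimage, Set.mem_Iio, Set.mem_setOf_eq]
      constructor <;> intro <;> linarith
    rw [hs1, hs2] at h1 h2
    refine abs_sub_le_iff.2 ⟨?_, ?_⟩
    · exact arith he ENNReal.toReal_nonneg ENNReal.toReal_nonneg hδ h1
    · simp only [hA'_def, hB'_def]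
      nlinarith [ENNReal.toReal_nonneg (a := P1 {a | t < μ - U a})]
  -- A + A' = Aa on Ioi 0
  have hsum : ∀ t : ℝ, 0 < t → A t + A' t = Aa t := by
    intro t ht
    have hset : {a | t < |U a - μ|} = {a | t < U a - μ} ∪ {a | t < μ - U a} := by
      ext a
      simp only [Set.mem_setOf_eq, Set.mem_union, lt_abs, neg_sub]
    have hdisj : Disjoint {a | t < U a - μ} {a | t < μ - U a} := by
      rw [Set.disjoint_left]
      intro a (h1 : t < U a - μ) (h2 : t < μ - U a)
      linarith
    have hm2 : MeasurableSet {a | t < μ - U a} :=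
      (measurable_const.sub hU) measurableSet_Ioi
    simp only [hA_def, hA'_def, hAa_def, hset]
    rw [measure_union hdisj hm2,
      ENNReal.toReal_add (measure_ne_top _ _) (measure_ne_top _ _)]
  -- the bound function
  set g : ℝ → ℝ :=
    fun t => (e - 1) * Aa t + (Set.Ioc (0:ℝ) Δ).indicator (fun _ => 2 * δ) t with hg_def
  have hgint : IntegrableOn g (Set.Ioi 0) := by
    refine (iAa.const_mul _).add ?_
    exact ((integrable_indicator_iff measurableSet_Ioc).2
      (integrableOn_const measure_Ioc_lt_top.ne enorm_ne_top)).integrableOn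
  have hzeroU : ∀ t : ℝ, Δ < t → A t = 0 ∧ A' t = 0 ∧ B t = 0 ∧ B' t = 0 := by
    intro t ht
    refine ⟨?_, ?_, ?_, ?_⟩ <;>
      simp only [hA_def, hA'_def, hB_def, hB'_def]
    · rw [tail_zero P1 hU1 ht]; simp
    · rw [tail_zero P1 hU2 ht]; simp
    · rw [tail_zero P2 hV1 ht]; simp
    · rw [tail_zero P2 hV2 ht]; simp
  have hptwise : ∀ t ∈ Set.Ioi (0:ℝ), |A t - B t + (B' t - A' t)| ≤ g t := by
    intro t ht
    have habs : |A t - B t + (B' t - A' t)| ≤ |A t - B t| + |A' t - B' t| := by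
      have := abs_add_le (A t - B t) (B' t - A' t)
      calc |A t - B t + (B' t - A' t)| ≤ |A t - B t| + |B' t - A' t| := this
        _ = |A t - B t| + |A' t - B' t| := by rw [abs_sub_comm (B' t) (A' t)]
    by_cases htΔ : t ≤ Δ
    · have hind : (Set.Ioc (0:ℝ) Δ).indicator (fun _ => 2 * δ) t = 2 * δ :=
        Set.indicator_of_mem (show t ∈ Set.Ioc (0:ℝ) Δ from ⟨ht, htΔ⟩) _
      have := hsum t ht
      calc |A t - B t + (B' t - A' t)| ≤ |A t - B t| + |A' t - B' t| := habs
        _ ≤ ((e - 1) * A t + δ) + ((e - 1) * A' t + δ) := add_le_add (hAB t) (hA'B' t)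
        _ = (e - 1) * (A t + A' t) + 2 * δ := by ring
        _ = g t := by rw [this, hg_def]; simp [hind]
    · have hind : (Set.Ioc (0:ℝ) Δ).indicator (fun _ => 2 * δ) t = 0 :=
        Set.indicator_of_notMem (fun h => htΔ h.2) _
      obtain ⟨z1, z2, z3, z4⟩ := hzeroU t (not_le.1 htΔ)
      rw [z1, z2, z3, z4]
      simp only [hg_def, hind, add_zero, sub_zero, zero_sub, neg_zero, zero_add, abs_zero]
      exact mul_nonneg (by linarith) ENNReal.toReal_nonneg
  have hgval : ∫ t in Set.Ioi 0, g t =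
      (e - 1) * (∫ t in Set.Ioi 0, Aa t) + 2 * δ * Δ := by
    rw [hg_def]
    rw [integral_add (iAa.const_mul _) (((integrable_indicator_iff measurableSet_Ioc).2
      (integrableOn_const measure_Ioc_lt_top.ne enorm_ne_top)).integrableOn),
      integral_const_mul]
    congr 1
    rw [integral_indicator measurableSet_Ioc,
      Measure.restrict_restrict measurableSet_Ioc,
      Set.inter_eq_left.2 Set.Ioc_subset_Ioi_self, setIntegral_const]
    rw [Real.volume_real_Ioc_of_le hΔ, smul_eq_mul]
    ring
  -- conclude
  rw [show (∫ ω, U ω) = ∫ ω, U ω ∂P1 from rfl, show (∫ ω, V ω) = ∫ ω, V ω ∂P2 from rfl,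
    hD, show (∫ ω, |U ω - μ|) = ∫ ω, |U ω - μ| ∂P1 from rfl, hAbs]
  calc |∫ t in Set.Ioi 0, (A t - B t + (B' t - A' t))|
      ≤ ∫ t in Set.Ioi 0, |A t - B t + (B' t - A' t)| := by
        simpa [Real.norm_eq_abs] using
          norm_integral_le_integral_norm (fun t => A t - B t + (B' t - A' t))
            (μ := volume.restrict (Set.Ioi 0))
    _ ≤ ∫ t in Set.Ioi 0, g t :=
        setIntegral_mono_on (((iA.sub iB).add (iB'.sub iA')).abs) hgint
          measurableSet_Ioi hptwise
    _ = (e - 1) * (∫ t in Set.Ioi 0, Aa t) + 2 * δ * Δ := hgval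
end

section
/- Let P ∼ Beta(β, β) and, conditioned on P, let Z₁, ..., Zₙ ∈ {0,1} be independent Bernoulli(P). Then for any function f : {0,1}ⁿ → ℝ, E[f(Z)·Σᵢ(Zᵢ - P)] = 2β·E[f(Z)·(P - 1/2)]. -/
section BBEAux
open MeasureTheory Set

lemma betaInt_left (a b : ℝ) (ha : 0 < a) :
    IntervalIntegrable (fun x => x ^ (a - 1) * (1 - x) ^ (b - 1)) volume 0 (1/2) := by
  apply IntervalIntegrable.mul_continuousOn
  · exact intervalIntegral.intervalIntegrable_rpow' (by linarith)
  · apply continuousOn_of_forall_continuousAt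
    intro x hx
    rw [uIcc_of_le (by norm_num : (0:ℝ) ≤ 1/2)] at hx
    have h1 : (1:ℝ) - x ≠ 0 := by
      have := hx.2; intro h; rw [sub_eq_zero] at h; linarith
    exact (Real.continuousAt_rpow_const _ _ (Or.inl h1)).comp (by fun_prop)

lemma betaInt (a b : ℝ) (ha : 0 < a) (hb : 0 < b) :
    IntervalIntegrable (fun x => x ^ (a - 1) * (1 - x) ^ (b - 1)) volume 0 1 := by
  refine (betaInt_left a b ha).trans ?_
  have h := (betaInt_left b a hb).comp_sub_left 1
  norm_num at h
  refine (h.symm.congr ?_)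
  intro x _
  simp [mul_comm, sub_sub_cancel]

lemma keyInt (a b : ℝ) (ha : 0 < a) (hb : 0 < b) :
    ∫ x in Ioo (0:ℝ) 1, x ^ (a - 1) * (1 - x) ^ (b - 1) * (a * (1 - x) - b * x) = 0 := by
  have hint : IntervalIntegrable
      (fun x => x ^ (a - 1) * (1 - x) ^ (b - 1) * (a * (1 - x) - b * x)) volume 0 1 :=
    (betaInt a b ha hb).mul_continuousOn (by fun_prop)
  have hcont : ContinuousOn (fun x : ℝ => x ^ a * (1 - x) ^ b) (Icc 0 1) :=
    ((Real.continuous_rpow_const ha.le).continuousOn).mul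
      ((Real.continuous_rpow_const hb.le).comp (by fun_prop)).continuousOn
  have hderiv : ∀ x ∈ Ioo (0:ℝ) 1,
      HasDerivAt (fun x : ℝ => x ^ a * (1 - x) ^ b)
        (x ^ (a - 1) * (1 - x) ^ (b - 1) * (a * (1 - x) - b * x)) x := by
    intro x hx
    have hx0 : x ≠ 0 := hx.1.ne'
    have hx1 : (1:ℝ) - x ≠ 0 := by intro h; rw [sub_eq_zero] at h; exact hx.2.ne h.symm
    have h1 : HasDerivAt (fun x : ℝ => x ^ a) (a * x ^ (a - 1)) x :=
      Real.hasDerivAt_rpow_const (Or.inl hx0)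
    have h2 : HasDerivAt (fun x : ℝ => (1 - x) ^ b) (b * (1 - x) ^ (b - 1) * (-1)) x := by
      exact (Real.hasDerivAt_rpow_const (Or.inl hx1)).comp x
        ((hasDerivAt_id x).const_sub 1)
    refine (h1.mul h2).congr_deriv ?_
    have e1 : x ^ a = x ^ (a - 1) * x := by
      rw [← Real.rpow_add_one hx0 (a - 1)]; norm_num
    have e2 : (1 - x) ^ b = (1 - x) ^ (b - 1) * (1 - x) := by
      rw [← Real.rpow_add_one hx1 (b - 1)]; norm_num
    rw [e1, e2]; ring
  have := intervalIntegral.integral_eq_sub_of_hasDeriv_right_of_le (by norm_num : (0:ℝ) ≤ 1)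
    hcont (fun x hx => (hderiv x hx).hasDerivWithinAt) hint
  rw [intervalIntegral.integral_of_le (by norm_num : (0:ℝ) ≤ 1),
    MeasureTheory.integral_Ioc_eq_integral_Ioo] at this
  rw [this]
  norm_num [Real.zero_rpow ha.ne', Real.zero_rpow hb.ne']

lemma bbe_prod_eq (n : ℕ) (z : Fin n → Bool) (p : ℝ) :
    (∏ i, if z i then p else 1 - p) =
      p ^ (Finset.univ.filter fun i => z i = true).card *
        (1 - p) ^ (n - (Finset.univ.filter fun i => z i = true).card) := by
  rw [Finset.prod_ite, Finset.prod_const, Finset.prod_const]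
  have h := Finset.card_filter_add_card_filter_not (s := Finset.univ)
    (p := fun i : Fin n => z i = true)
  simp only [Finset.card_univ, Fintype.card_fin] at h
  have h2 : (Finset.univ.filter fun i : Fin n => ¬ z i = true).card =
      n - (Finset.univ.filter fun i : Fin n => z i = true).card := by omega
  rw [h2]

lemma bbe_sum_eq (n : ℕ) (z : Fin n → Bool) (p : ℝ) :
    ∑ i, ((if z i then (1:ℝ) else 0) - p) =
      ((Finset.univ.filter fun i => z i = true).card : ℝ) - n * p := by
  rw [Finset.sum_sub_distrib, Finset.sum_boole, Finset.sum_const]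
  simp [nsmul_eq_mul]

lemma keyz (β : ℝ) (hβ : 0 < β) (n kk : ℕ) (hk : kk ≤ n) (c : ℝ) :
    ∫ p in Ioo (0:ℝ) 1, p ^ (β-1) * (1-p) ^ (β-1) *
      (p ^ kk * (1-p) ^ (n-kk) * (c * (((kk:ℝ) - n*p) - 2*β*(p - 1/2)))) = 0 := by
  have hkr : (kk:ℝ) ≤ n := by exact_mod_cast hk
  have ha : 0 < β + (kk:ℝ) := by positivity
  have hb : 0 < β + ((n:ℝ) - kk) := by linarith
  have heq : EqOn
      (fun p : ℝ => p ^ (β-1) * (1-p) ^ (β-1) *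
        (p ^ kk * (1-p) ^ (n-kk) * (c * (((kk:ℝ) - n*p) - 2*β*(p - 1/2)))))
      (fun p : ℝ => c * (p ^ (β + (kk:ℝ) - 1) * (1-p) ^ (β + ((n:ℝ) - kk) - 1) *
        ((β + (kk:ℝ)) * (1-p) - (β + ((n:ℝ) - kk)) * p))) (Ioo 0 1) := by
    intro p hp
    obtain ⟨hp0, hp1⟩ := hp
    have hq : (0:ℝ) < 1 - p := by linarith
    simp only
    rw [← Real.rpow_natCast p kk, ← Real.rpow_natCast (1-p) (n-kk), Nat.cast_sub hk]
    rw [show β + (kk:ℝ) - 1 = (β - 1) + kk by ring, Real.rpow_add hp0,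
        show β + ((n:ℝ) - kk) - 1 = (β - 1) + ((n:ℝ) - kk) by ring, Real.rpow_add hq]
    ring
  rw [setIntegral_congr_fun measurableSet_Ioo heq, MeasureTheory.integral_const_mul,
    keyInt _ _ ha hb, mul_zero]

end BBEAux



open MeasureTheory

/-- The expectation `E[h(P, Z)]` where `P ∼ Beta(β, β)` and, conditioned on `P = p`,
`Z = (Z₁, …, Zₙ)` are i.i.d. `Bernoulli(p)` bits, written out as a Beta-density integral of
a sum over the `2^n` bit patterns weighted by their Bernoulli probabilities. -/
noncomputable def betaBernoulliExp (β : ℝ) (n : ℕ) (h : ℝ → (Fin n → Bool) → ℝ) : ℝ :=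
  (∫ p in Set.Ioo (0 : ℝ) 1, p ^ (β - 1) * (1 - p) ^ (β - 1) *
      ∑ z : Fin n → Bool, (∏ i, if z i then p else 1 - p) * h p z) /
  ∫ p in Set.Ioo (0 : ℝ) 1, p ^ (β - 1) * (1 - p) ^ (β - 1)

/-- Fingerprinting lemma: if `P ∼ Beta(β, β)` and, conditioned on `P`, `Z₁, …, Zₙ ∈ {0,1}`
are i.i.d. `Bernoulli(P)`, then for any `f : {0,1}ⁿ → ℝ`,
`E[f(Z)·Σᵢ (Zᵢ - P)] = 2β · E[f(Z)·(P - 1/2)]`. -/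
theorem stmt5 (β : ℝ) (hβ : 0 < β) (n : ℕ) (f : (Fin n → Bool) → ℝ) :
    betaBernoulliExp β n
        (fun p z => f z * ∑ i, ((if z i then (1 : ℝ) else 0) - p)) =
      2 * β * betaBernoulliExp β n (fun p z => f z * (p - 1 / 2)) := by
  unfold betaBernoulliExp
  simp only [bbe_prod_eq, bbe_sum_eq]
  set k : (Fin n → Bool) → ℕ := fun z => (Finset.univ.filter fun i => z i = true).card with hkdef
  rw [← mul_div_assoc]
  congr 1
  have hWmul : ∀ c : ℝ → ℝ, Continuous c →
      IntegrableOn (fun p => p ^ (β-1) * (1-p) ^ (β-1) * c p) (Set.Ioo (0:ℝ) 1) volume := by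
    intro c hc
    have h := (betaInt β β hβ hβ).mul_continuousOn (g := c) hc.continuousOn
    rwa [intervalIntegrable_iff_integrableOn_Ioo_of_le (by norm_num)] at h
  have hkle : ∀ z, k z ≤ n := fun z => by
    simpa using (Finset.card_filter_le Finset.univ (fun i => z i = true))
  have hInt1 : IntegrableOn (fun p => p ^ (β-1) * (1-p) ^ (β-1) *
      ∑ z : Fin n → Bool, p ^ k z * (1-p) ^ (n - k z) * (f z * ((k z : ℝ) - n * p)))
      (Set.Ioo (0:ℝ) 1) volume := hWmul _ (by fun_prop)
  have hInt2 : IntegrableOn (fun p => p ^ (β-1) * (1-p) ^ (β-1) *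
      ∑ z : Fin n → Bool, p ^ k z * (1-p) ^ (n - k z) * (f z * (p - 1/2)))
      (Set.Ioo (0:ℝ) 1) volume := hWmul _ (by fun_prop)
  rw [← sub_eq_zero, ← MeasureTheory.integral_const_mul,
    ← MeasureTheory.integral_sub hInt1 (hInt2.const_mul _)]
  have hptw : ∀ p ∈ Set.Ioo (0:ℝ) 1,
      (p ^ (β-1) * (1-p) ^ (β-1) *
        ∑ z : Fin n → Bool, p ^ k z * (1-p) ^ (n - k z) * (f z * ((k z : ℝ) - n * p))) -
      2 * β * (p ^ (β-1) * (1-p) ^ (β-1) *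
        ∑ z : Fin n → Bool, p ^ k z * (1-p) ^ (n - k z) * (f z * (p - 1/2))) =
      ∑ z : Fin n → Bool, p ^ (β-1) * (1-p) ^ (β-1) *
        (p ^ k z * (1-p) ^ (n - k z) * (f z * (((k z : ℝ) - n*p) - 2*β*(p - 1/2)))) := by
    intro p _
    simp only [Finset.mul_sum, ← Finset.sum_sub_distrib]
    exact Finset.sum_congr rfl fun z _ => by ring
  rw [setIntegral_congr_fun measurableSet_Ioo hptw,
    MeasureTheory.integral_finset_sum _ (fun z _ => hWmul _ (by fun_prop))]
  exact Finset.sum_eq_zero fun z _ => keyz β hβ n (k z) (hkle z) (f z)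
end

section
/- Let P ∼ Beta(β, β) and, conditioned on P, Z₁, ..., Zₙ i.i.d. Bernoulli(P). Then for any f : {0,1}ⁿ → ℝ, E[f(Z)·Σᵢ(Zᵢ - P)] = β·E[(f(Z) - 1/2)² + (P - 1/2)² - (f(Z) - P)²]. -/
open MeasureTheory

section Aux

private lemma rbeta_integrable {a b : ℝ} (ha : 0 < a) (hb : 0 < b) :
    IntegrableOn (fun p : ℝ => p ^ (a - 1) * (1 - p) ^ (b - 1)) (Set.Ioo 0 1) := by
  have h := (Complex.betaIntegral_convergent (u := (a:ℂ)) (v := (b:ℂ)) (by simpa) (by simpa)).1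
  have h2 : IntegrableOn (fun x : ℝ => ((x:ℂ) ^ ((a:ℂ) - 1) * (1 - (x:ℂ)) ^ ((b:ℂ) - 1)).re)
      (Set.Ioo 0 1) :=
    (h.mono_set Set.Ioo_subset_Ioc_self).re
  refine h2.congr_fun (fun p hp => ?_) measurableSet_Ioo
  obtain ⟨hp0, hp1⟩ := hp
  beta_reduce
  rw [show ((a:ℂ) - 1) = ((a - 1 : ℝ) : ℂ) by push_cast; ring,
      show ((b:ℂ) - 1) = ((b - 1 : ℝ) : ℂ) by push_cast; ring,
      show ((1:ℂ) - (p:ℂ)) = (((1 - p : ℝ)) : ℂ) by push_cast; ring,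
      ← Complex.ofReal_cpow hp0.le, ← Complex.ofReal_cpow (by linarith), ← Complex.ofReal_mul]
  simp

private lemma rbeta_eq {a b : ℝ} (ha : 0 < a) (hb : 0 < b) :
    ∫ p in Set.Ioo (0:ℝ) 1, p ^ (a - 1) * (1 - p) ^ (b - 1)
      = Real.Gamma a * Real.Gamma b / Real.Gamma (a + b) := by
  have hG : Real.Gamma (a + b) ≠ 0 := (Real.Gamma_pos_of_pos (by linarith)).ne'
  have key := Complex.Gamma_mul_Gamma_eq_betaIntegral (s := (a:ℂ)) (t := (b:ℂ))
    (by simpa) (by simpa)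
  have hbeta : Complex.betaIntegral (a:ℂ) (b:ℂ)
      = ((∫ p in Set.Ioo (0:ℝ) 1, p ^ (a - 1) * (1 - p) ^ (b - 1) : ℝ) : ℂ) := by
    rw [Complex.betaIntegral, intervalIntegral.integral_of_le zero_le_one,
        integral_Ioc_eq_integral_Ioo]
    calc ∫ p in Set.Ioo (0:ℝ) 1, (p:ℂ) ^ ((a:ℂ) - 1) * (1 - (p:ℂ)) ^ ((b:ℂ) - 1)
        = ∫ p in Set.Ioo (0:ℝ) 1, ((p ^ (a - 1) * (1 - p) ^ (b - 1) : ℝ) : ℂ) := by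
          refine setIntegral_congr_fun measurableSet_Ioo (fun p hp => ?_)
          obtain ⟨hp0, hp1⟩ := hp
          rw [show ((a:ℂ) - 1) = ((a - 1 : ℝ) : ℂ) by push_cast; ring,
              show ((b:ℂ) - 1) = ((b - 1 : ℝ) : ℂ) by push_cast; ring,
              show ((1:ℂ) - (p:ℂ)) = (((1 - p : ℝ)) : ℂ) by push_cast; ring,
              ← Complex.ofReal_cpow hp0.le, ← Complex.ofReal_cpow (by linarith),
              ← Complex.ofReal_mul]
      _ = _ := integral_ofReal
  rw [hbeta] at key
  rw [← Complex.ofReal_add, Complex.Gamma_ofReal, Complex.Gamma_ofReal,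
      Complex.Gamma_ofReal] at key
  rw [← Complex.ofReal_mul, ← Complex.ofReal_mul] at key
  have := Complex.ofReal_injective key
  field_simp
  linarith [this]

private lemma reqon (a b c d : ℝ) : Set.EqOn
    (fun p : ℝ => p ^ (a - 1) * (1 - p) ^ (b - 1) * c + p ^ (a + 1 - 1) * (1 - p) ^ (b - 1) * d)
    (fun p : ℝ => p ^ (a - 1) * (1 - p) ^ (b - 1) * (c + d * p)) (Set.Ioo 0 1) := by
  intro p hp
  obtain ⟨hp0, hp1⟩ := hp
  have : p ^ (a + 1 - 1) = p ^ (a - 1) * p := by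
    rw [show a + 1 - 1 = (a - 1) + 1 by ring, Real.rpow_add_one hp0.ne']
  simp only [this]; ring

private lemma rlin_integrable {a b : ℝ} (c d : ℝ) (ha : 0 < a) (hb : 0 < b) :
    IntegrableOn (fun p : ℝ => p ^ (a - 1) * (1 - p) ^ (b - 1) * (c + d * p)) (Set.Ioo 0 1) := by
  have h : IntegrableOn
      (fun p : ℝ => p ^ (a - 1) * (1 - p) ^ (b - 1) * c + p ^ (a + 1 - 1) * (1 - p) ^ (b - 1) * d)
      (Set.Ioo (0:ℝ) 1) :=
    ((rbeta_integrable ha hb).mul_const c).add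
      ((rbeta_integrable (by linarith : (0:ℝ) < a + 1) hb).mul_const d)
  exact h.congr_fun (reqon a b c d) measurableSet_Ioo

private lemma rlin_eq {a b : ℝ} (c d : ℝ) (ha : 0 < a) (hb : 0 < b) :
    ∫ p in Set.Ioo (0:ℝ) 1, p ^ (a - 1) * (1 - p) ^ (b - 1) * (c + d * p)
      = (c + d * a / (a + b)) * (Real.Gamma a * Real.Gamma b / Real.Gamma (a + b)) := by
  rw [← setIntegral_congr_fun measurableSet_Ioo (reqon a b c d)]
  rw [integral_add ((rbeta_integrable ha hb).mul_const c)
      ((rbeta_integrable (by linarith : (0:ℝ) < a + 1) hb).mul_const d),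
    MeasureTheory.integral_mul_const, MeasureTheory.integral_mul_const, rbeta_eq ha hb,
    rbeta_eq (by linarith : (0:ℝ) < a + 1) hb]
  have h1 : Real.Gamma (a + 1) = a * Real.Gamma a := Real.Gamma_add_one ha.ne'
  have h2 : Real.Gamma (a + 1 + b) = (a + b) * Real.Gamma (a + b) := by
    rw [show a + 1 + b = (a + b) + 1 by ring, Real.Gamma_add_one (by linarith)]
  have hab : (0:ℝ) < a + b := by linarith
  have hG : Real.Gamma (a + b) ≠ 0 := (Real.Gamma_pos_of_pos hab).ne'
  rw [h1, h2]
  field_simp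

end Aux

section Main

variable {β : ℝ} {n : ℕ}

private noncomputable def Kc (n : ℕ) (z : Fin n → Bool) : ℕ :=
  (Finset.univ.filter fun i => z i = true).card

private lemma Kc_le (z : Fin n → Bool) : Kc n z ≤ n := by
  simpa [Kc] using Finset.card_filter_le Finset.univ (fun i => z i = true)

/-- The numerator integral, for an integrand which is per-`z` affine in `p`. -/
private lemma num_eq (hβ : 0 < β) (h : ℝ → (Fin n → Bool) → ℝ) (c d : (Fin n → Bool) → ℝ)
    (hcd : ∀ p, p ∈ Set.Ioo (0:ℝ) 1 → ∀ z, h p z = c z + d z * p) :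
    (∫ p in Set.Ioo (0 : ℝ) 1, p ^ (β - 1) * (1 - p) ^ (β - 1) *
        ∑ z : Fin n → Bool, (∏ i, if z i then p else 1 - p) * h p z)
      = ∑ z : Fin n → Bool,
          (c z + d z * (β + Kc n z) / (β + Kc n z + (β + (n - Kc n z : ℕ)))) *
            (Real.Gamma (β + Kc n z) * Real.Gamma (β + (n - Kc n z : ℕ)) /
              Real.Gamma (β + Kc n z + (β + (n - Kc n z : ℕ)))) := by
  have ha : ∀ z : Fin n → Bool, (0:ℝ) < β + Kc n z := fun z => by positivity
  have hb : ∀ z : Fin n → Bool, (0:ℝ) < β + (n - Kc n z : ℕ) := fun z => by positivity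
  have key : ∀ p, p ∈ Set.Ioo (0:ℝ) 1 →
      p ^ (β - 1) * (1 - p) ^ (β - 1) *
          ∑ z : Fin n → Bool, (∏ i, if z i then p else 1 - p) * h p z
        = ∑ z : Fin n → Bool,
            p ^ ((β + Kc n z) - 1) * (1 - p) ^ ((β + (n - Kc n z : ℕ)) - 1) *
              (c z + d z * p) := by
    intro p hp
    obtain ⟨hp0, hp1⟩ := hp
    have h1p : (0:ℝ) < 1 - p := by linarith
    rw [Finset.mul_sum]
    refine Finset.sum_congr rfl (fun z _ => ?_)
    have hprod : (∏ i, if z i then p else 1 - p)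
        = p ^ (Kc n z) * (1 - p) ^ (n - Kc n z) := by
      rw [Finset.prod_ite, Finset.prod_const, Finset.prod_const]
      congr 2
      have h := Finset.card_filter_add_card_filter_not
        (s := (Finset.univ : Finset (Fin n))) (p := fun i => z i = true)
      simp only [Finset.card_univ, Fintype.card_fin] at h ⊢
      simp only [Kc]
      omega
    rw [hprod, hcd p ⟨hp0, hp1⟩ z]
    have e1 : p ^ (β - 1) * p ^ (Kc n z) = p ^ ((β + Kc n z) - 1) := by
      rw [← Real.rpow_natCast p (Kc n z), ← Real.rpow_add hp0]
      congr 1; ring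
    have e2 : (1 - p) ^ (β - 1) * (1 - p) ^ (n - Kc n z)
        = (1 - p) ^ ((β + (n - Kc n z : ℕ)) - 1) := by
      rw [← Real.rpow_natCast (1 - p) (n - Kc n z), ← Real.rpow_add h1p]
      congr 1; ring
    calc p ^ (β - 1) * (1 - p) ^ (β - 1) *
          (p ^ (Kc n z) * (1 - p) ^ (n - Kc n z) * (c z + d z * p))
        = (p ^ (β - 1) * p ^ (Kc n z)) * ((1 - p) ^ (β - 1) * (1 - p) ^ (n - Kc n z)) *
            (c z + d z * p) := by ring
      _ = _ := by rw [e1, e2]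
  rw [setIntegral_congr_fun measurableSet_Ioo key,
    integral_finset_sum _ (fun z _ => rlin_integrable (c z) (d z) (ha z) (hb z))]
  exact Finset.sum_congr rfl (fun z _ => rlin_eq (c z) (d z) (ha z) (hb z))

end Main

/-- Fingerprinting lemma (second form): if `P ∼ Beta(β, β)` and, conditioned on `P`,
`Z₁, …, Zₙ ∈ {0,1}` are i.i.d. `Bernoulli(P)`, then for any `f : {0,1}ⁿ → ℝ`,
`E[f(Z)·Σᵢ (Zᵢ - P)] = β · E[(f(Z) - 1/2)² + (P - 1/2)² - (f(Z) - P)²]`. -/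
theorem stmt6 (β : ℝ) (hβ : 0 < β) (n : ℕ) (f : (Fin n → Bool) → ℝ) :
    betaBernoulliExp β n
        (fun p z => f z * ∑ i, ((if z i then (1 : ℝ) else 0) - p)) =
      β * betaBernoulliExp β n
        (fun p z => (f z - 1 / 2) ^ 2 + (p - 1 / 2) ^ 2 - (f z - p) ^ 2) := by
  unfold betaBernoulliExp
  rw [← mul_div_assoc]
  congr 1
  have hL := num_eq hβ (fun p z => f z * ∑ i, ((if z i then (1 : ℝ) else 0) - p))
    (fun z => f z * Kc n z) (fun z => -(f z * n)) ?hLcd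
  have hR := num_eq hβ (fun p z => (f z - 1 / 2) ^ 2 + (p - 1 / 2) ^ 2 - (f z - p) ^ 2)
    (fun z => -(f z - 1/2)) (fun z => 2 * (f z - 1/2)) ?hRcd
  case hLcd =>
    intro p hp z
    have hsum : (∑ i, ((if z i then (1:ℝ) else 0) - p)) = (Kc n z : ℝ) - n * p := by
      rw [Finset.sum_sub_distrib, Finset.sum_const, Finset.sum_boole]
      simp [Kc, mul_comm]
    rw [hsum]; ring
  case hRcd => intro p hp z; ring
  rw [hL, hR, Finset.mul_sum]
  rw [← sub_eq_zero, ← Finset.sum_sub_distrib]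
  -- per-term rewrite
  have hterm : ∀ z : Fin n → Bool,
      (f z * Kc n z + -(f z * n) * (β + Kc n z) / (β + Kc n z + (β + (n - Kc n z : ℕ)))) *
          (Real.Gamma (β + Kc n z) * Real.Gamma (β + (n - Kc n z : ℕ)) /
            Real.Gamma (β + Kc n z + (β + (n - Kc n z : ℕ)))) -
        β * ((-(f z - 1/2) + 2 * (f z - 1/2) * (β + Kc n z) /
              (β + Kc n z + (β + (n - Kc n z : ℕ)))) *
          (Real.Gamma (β + Kc n z) * Real.Gamma (β + (n - Kc n z : ℕ)) /
            Real.Gamma (β + Kc n z + (β + (n - Kc n z : ℕ)))))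
      = (β / (2 * (2 * β + n)) / Real.Gamma (2 * β + n)) *
          ((2 * (Kc n z : ℝ) - n) *
            (Real.Gamma (β + Kc n z) * Real.Gamma (β + (n - Kc n z : ℕ)))) := by
    intro z
    have hk := Kc_le z
    have hc : ((n - Kc n z : ℕ) : ℝ) = (n : ℝ) - (Kc n z : ℝ) := by
      push_cast [Nat.cast_sub hk]; ring
    have hs : β + (Kc n z : ℝ) + (β + ((n - Kc n z : ℕ) : ℝ)) = 2 * β + n := by
      rw [hc]; ring
    rw [hs]
    have hpos : (0:ℝ) < 2 * β + n := by positivity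
    field_simp
    ring
  rw [Finset.sum_congr rfl (fun z _ => hterm z), ← Finset.mul_sum]
  -- the symmetric sum vanishes under the involution z ↦ !z
  have hsum0 : (∑ z : Fin n → Bool,
      (2 * (Kc n z : ℝ) - n) *
        (Real.Gamma (β + Kc n z) * Real.Gamma (β + (n - Kc n z : ℕ)))) = 0 := by
    set F : (Fin n → Bool) → ℝ := fun z =>
      (2 * (Kc n z : ℝ) - n) *
        (Real.Gamma (β + Kc n z) * Real.Gamma (β + (n - Kc n z : ℕ))) with hF
    have hKe : ∀ z : Fin n → Bool, Kc n (fun i => !(z i)) = n - Kc n z := by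
      intro z
      have h := Finset.card_filter_add_card_filter_not
        (s := (Finset.univ : Finset (Fin n))) (p := fun i => z i = true)
      simp only [Finset.card_univ, Fintype.card_fin] at h
      have h2 : Kc n (fun i => !(z i)) = (Finset.univ.filter fun i => ¬ (z i = true)).card := by
        simp only [Kc]
        congr 1
        ext i
        simp
      rw [h2]
      simp only [Kc] at h ⊢
      omega
    have hneg : ∀ z : Fin n → Bool, F (fun i => !(z i)) = -F z := by
      intro z
      have hk := Kc_le z
      simp only [hF, hKe z]
      have h1 : ((n - (n - Kc n z) : ℕ) : ℝ) = (Kc n z : ℝ) := by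
        rw [Nat.sub_sub_self hk]
      have h2 : ((n - Kc n z : ℕ) : ℝ) = (n : ℝ) - (Kc n z : ℝ) := by
        push_cast [Nat.cast_sub hk]; ring
      rw [h1, h2]
      ring
    have hinv : Function.Involutive (fun z : Fin n → Bool => (fun i => !(z i))) := by
      intro z; funext i; simp
    have h1 : ∑ z, F z = ∑ z : Fin n → Bool, F (fun i => !(z i)) :=
      (Fintype.sum_bijective _ hinv.bijective _ _ (fun z => rfl)).symm
    have h2 : (∑ z : Fin n → Bool, F (fun i => !(z i))) = -∑ z, F z := by
      rw [← Finset.sum_neg_distrib]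
      exact Finset.sum_congr rfl (fun z _ => hneg z)
    have := h1.trans h2
    linarith
  rw [hsum0, mul_zero]
end

section
/- For B < 1/4, define the clipped logistic objective L_c(θ) whose derivative is (2/3)·clip(-1/(2(1+e^{θ/2})), B) + (1/3)·clip(1/(1+e^{-θ}), B), where clip(u, B) = max(min(u, B), -B). Then L_c'(θ) = 0 exactly at θ = 2·log(1/B - 1), i.e., the minimizer of the clipped objective is θ*_clipped = 2·log(1/B - 1). -/
lemma stmt14_aux (B x : ℝ) (hB0 : 0 < B) (hB : B < 1 / 4) (hx : 0 < x) :
    (2 / 3) * max (min (-1 / (2 * (1 + x))) B) (-B) +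
        (1 / 3) * max (min (1 / (1 + 1 / (x * x))) B) (-B) = 0 ↔ x = 1 / B - 1 := by
  have h1x : 0 < 1 + x := by linarith
  have hxx : 0 < x * x := mul_pos hx hx
  have h1xx : 0 < 1 + 1 / (x * x) := by positivity
  have ha : -1 / (2 * (1 + x)) < 0 := by
    apply div_neg_of_neg_of_pos <;> linarith
  have hs : 0 < 1 / (1 + 1 / (x * x)) := by positivity
  have hmin1 : min (-1 / (2 * (1 + x))) B = -1 / (2 * (1 + x)) :=
    min_eq_left (by linarith)
  have hmax2 : max (min (1 / (1 + 1 / (x * x))) B) (-B) = min (1 / (1 + 1 / (x * x))) B :=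
    max_eq_left (le_trans (by linarith) (le_min (le_of_lt hs) (le_of_lt hB0)))
  rw [hmin1, hmax2]
  constructor
  · intro h
    rcases le_total (-1 / (2 * (1 + x))) (-B) with h1 | h1 <;>
      rcases le_total (1 / (1 + 1 / (x * x))) B with h2 | h2
    · rw [max_eq_right h1, min_eq_left h2] at h
      exfalso; nlinarith
    · rw [max_eq_right h1, min_eq_right h2] at h
      exfalso; nlinarith
    · rw [max_eq_left h1, min_eq_left h2] at h
      exfalso
      have hx3 : x * x * x = 1 := by
        have hd1 : (2:ℝ) * (1 + x) ≠ 0 := by positivity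
        have hd2 : (1:ℝ) + 1 / (x * x) ≠ 0 := by positivity
        field_simp at h
        nlinarith [h]
      have h1' : 1 ≤ B * (2 * (1 + x)) := by
        have : 1 / (2 * (1 + x)) ≤ B := by
          have := neg_le_neg h1
          simpa [neg_div] using this
        exact (div_le_iff₀ (by positivity)).mp this
      nlinarith [hx3, h1', sq_nonneg (x - 1), mul_pos hx hx]
    · rw [max_eq_left h1, min_eq_right h2] at h
      field_simp at h ⊢
      nlinarith [h]
  · intro h
    subst h
    have hxB : 0 < 1 / B - 1 := by
      rw [sub_pos, lt_div_iff₀ hB0]; linarith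
    have h1 : -1 / (2 * (1 + (1 / B - 1))) = -B / 2 := by
      rw [show 1 + (1 / B - 1) = 1 / B by ring]; field_simp
    have h2 : B ≤ 1 / (1 + 1 / ((1 / B - 1) * (1 / B - 1))) := by
      rw [le_div_iff₀ (by positivity)]
      have hne : (1 / B - 1) ≠ 0 := ne_of_gt hxB
      have hBne : B ≠ 0 := ne_of_gt hB0
      have h1B : (1 : ℝ) - B ≠ 0 := by intro hc; nlinarith
      have hpos : (0 : ℝ) < (1 - B) * (1 - B) := by nlinarith
      have h3 : 1 / ((1 / B - 1) * (1 / B - 1)) = B * B / ((1 - B) * (1 - B)) := by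
        field_simp
      rw [h3, show B * (1 + B * B / ((1 - B) * (1 - B))) =
          B * ((1 - B) * (1 - B) + B * B) / ((1 - B) * (1 - B)) by field_simp,
        div_le_one hpos]
      nlinarith
    rw [h1, min_eq_right h2, max_eq_left (by linarith)]
    ring

/-- For clipping threshold `B < 1/4`, the derivative of the clipped logistic objective,
`L_c'(θ) = (2/3)·clip(-1/(2(1+e^{θ/2})), B) + (1/3)·clip(1/(1+e^{-θ}), B)` with
`clip(u, B) = max(min(u, B), -B)`, vanishes exactly at `θ = 2·log(1/B - 1)`. -/
theorem stmt14 (B : ℝ) (hB0 : 0 < B) (hB : B < 1 / 4) (θ : ℝ) :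
    (2 / 3) * max (min (-1 / (2 * (1 + Real.exp (θ / 2)))) B) (-B) +
        (1 / 3) * max (min (1 / (1 + Real.exp (-θ))) B) (-B) = 0 ↔
      θ = 2 * Real.log (1 / B - 1) := by
  have hx : 0 < Real.exp (θ / 2) := Real.exp_pos _
  have hexp : Real.exp (-θ) = 1 / (Real.exp (θ / 2) * Real.exp (θ / 2)) := by
    rw [← Real.exp_add, Real.exp_neg, show θ / 2 + θ / 2 = θ by ring, one_div]
  rw [hexp, stmt14_aux B _ hB0 hB hx]
  have hxB : 0 < 1 / B - 1 := by
    rw [sub_pos, lt_div_iff₀ hB0]; linarith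
  constructor
  · intro h
    have := congrArg Real.log h
    rw [Real.log_exp] at this
    linarith
  · intro h
    rw [h, show 2 * Real.log (1 / B - 1) / 2 = Real.log (1 / B - 1) by ring,
      Real.exp_log hxB]
end

section
/- Consider the K-class softmax gradient field restricted to class 1: for θ = (θ⁽¹⁾, ..., θ⁽ᴷ⁾) ∈ (ℝᵖ)ᴷ and fixed x ≠ 0, define G⁽¹⁾(θ) = -(B/‖x‖₂)·(Σ_{k≥2} E_k)/√((Σ_{k≥2} E_k)² + Σ_{k≥2} E_k²)·x where E_k = exp(⟨θ⁽ᵏ⁾, x⟩). Then for k' ≥ 2, the Jacobian ∇_{θ⁽ᵏ'⁾} G⁽¹⁾(θ) = 0 if and only if ⟨θ⁽²⁾, x⟩ = ⟨θ⁽³⁾, x⟩ = ... = ⟨θ⁽ᴷ⁾, x⟩. -/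
open scoped RealInnerProductSpace
open Finset

lemma deriv_g_aux (a C C2 t : ℝ)
    (hw : 0 < (Real.exp t + C)^2 + (Real.exp t ^ 2 + C2)) :
    HasDerivAt (fun s => a * ((Real.exp s + C) /
        Real.sqrt ((Real.exp s + C)^2 + (Real.exp s ^ 2 + C2))))
      (a * (Real.exp t * (C2 - C * Real.exp t) /
        Real.sqrt ((Real.exp t + C)^2 + (Real.exp t ^ 2 + C2)) ^ 3)) t := by
  have he : HasDerivAt Real.exp (Real.exp t) t := Real.hasDerivAt_exp t
  have hu : HasDerivAt (fun s => Real.exp s + C) (Real.exp t) t := he.add_const C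
  have hW : HasDerivAt (fun s => (Real.exp s + C)^2 + (Real.exp s ^ 2 + C2))
      ((2 * (Real.exp t + C)^1 * Real.exp t) + (2 * (Real.exp t)^1 * Real.exp t)) t := by
    exact (hu.pow 2).add ((he.pow 2).add_const C2)
  have hs0 : 0 < Real.sqrt ((Real.exp t + C)^2 + (Real.exp t ^ 2 + C2)) := Real.sqrt_pos.mpr hw
  have hs : HasDerivAt (fun s => Real.sqrt ((Real.exp s + C)^2 + (Real.exp s ^ 2 + C2)))
      (((2 * (Real.exp t + C)^1 * Real.exp t) + (2 * (Real.exp t)^1 * Real.exp t)) /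
        (2 * Real.sqrt ((Real.exp t + C)^2 + (Real.exp t ^ 2 + C2)))) t :=
    hW.sqrt hw.ne'
  have hdiv := (hu.div hs hs0.ne').const_mul a
  convert hdiv using 1
  · rfl
  · rfl
  · rfl
  set S := Real.sqrt ((Real.exp t + C)^2 + (Real.exp t ^ 2 + C2)) with hSdef
  have hsq : S ^ 2 = (Real.exp t + C)^2 + (Real.exp t ^ 2 + C2) := Real.sq_sqrt hw.le
  have hS : S ≠ 0 := hs0.ne'
  field_simp
  linear_combination (-a) * hsq

lemma hasFDerivAt_g_inner_smul (p : ℕ) (x v0 : EuclideanSpace ℝ (Fin p))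
    (g : ℝ → ℝ) (g' : ℝ) (hg : HasDerivAt g g' ⟪v0, x⟫) :
    HasFDerivAt (fun v : EuclideanSpace ℝ (Fin p) => g ⟪v, x⟫ • x)
      ((g' • (innerSL ℝ x)).smulRight x) v0 := by
  have hinner : HasFDerivAt (fun v : EuclideanSpace ℝ (Fin p) => ⟪v, x⟫)
      (innerSL ℝ x) v0 := by
    have := (innerSL ℝ x).hasFDerivAt (x := v0)
    refine this.congr_of_eventuallyEq ?_
    filter_upwards with v
    simp [real_inner_comm, mul_comm]
  have := (hg.comp_hasFDerivAt v0 hinner).smul_const x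
  exact this

lemma smul_map_eq_zero_iff (p : ℕ) (x : EuclideanSpace ℝ (Fin p)) (hx : x ≠ 0) (c : ℝ) :
    ((c • (innerSL ℝ x)).smulRight x)
      = (0 : EuclideanSpace ℝ (Fin p) →L[ℝ] EuclideanSpace ℝ (Fin p)) ↔ c = 0 := by
  constructor
  · intro h
    have h2 := congrFun (congrArg DFunLike.coe h) x
    simp [ContinuousLinearMap.smulRight_apply, smul_smul] at h2
    rcases h2 with h2 | h2
    · exact h2
    · exact absurd h2 hx
  · rintro rfl; ext v; simp

set_option maxHeartbeats 1000000 in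
/-- For the clipped softmax gradient field restricted to class 1,
`G⁽¹⁾(θ) = -(B/‖x‖)·(Σ_{k≥2} E_k)/√((Σ_{k≥2} E_k)² + Σ_{k≥2} E_k²) · x` with
`E_k = exp⟨θ⁽ᵏ⁾, x⟩`, the Jacobians `∇_{θ⁽ᵏ'⁾} G⁽¹⁾(θ)` for all `k' ≥ 2` vanish
simultaneously iff all inner products `⟨θ⁽ᵏ⁾, x⟩`, `k ≥ 2`, are equal.
(Class 1 is index `0 : Fin K`; classes `k ≥ 2` are the indices `k ≠ 0`.) -/
theorem stmt18 (p K : ℕ) (hK : 3 ≤ K) (hKpos : 0 < K) (B : ℝ) (hB : 0 < B)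
    (x : EuclideanSpace ℝ (Fin p)) (hx : x ≠ 0)
    (θ : Fin K → EuclideanSpace ℝ (Fin p)) :
    (∀ k' : Fin K, k' ≠ ⟨0, hKpos⟩ →
        fderiv ℝ
          (fun v : EuclideanSpace ℝ (Fin p) =>
            (-(B / ‖x‖) *
                ((∑ k ∈ univ.erase (⟨0, hKpos⟩ : Fin K),
                    Real.exp ⟪Function.update θ k' v k, x⟫) /
                  Real.sqrt
                    ((∑ k ∈ univ.erase (⟨0, hKpos⟩ : Fin K),
                        Real.exp ⟪Function.update θ k' v k, x⟫) ^ 2 +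
                      ∑ k ∈ univ.erase (⟨0, hKpos⟩ : Fin K),
                        Real.exp ⟪Function.update θ k' v k, x⟫ ^ 2))) • x)
          (θ k') = 0) ↔
      ∀ k k' : Fin K, k ≠ ⟨0, hKpos⟩ → k' ≠ ⟨0, hKpos⟩ → ⟪θ k, x⟫ = ⟪θ k', x⟫ := by
  classical
  have hxn : (0:ℝ) < ‖x‖ := norm_pos_iff.mpr hx
  have hone : (⟨1, by omega⟩ : Fin K) ∈ univ.erase (⟨0, hKpos⟩ : Fin K) := by
    simp [Fin.ext_iff]
  have key : ∀ k' : Fin K, k' ≠ ⟨0, hKpos⟩ →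
      ((fderiv ℝ
          (fun v : EuclideanSpace ℝ (Fin p) =>
            (-(B / ‖x‖) *
                ((∑ k ∈ univ.erase (⟨0, hKpos⟩ : Fin K),
                    Real.exp ⟪Function.update θ k' v k, x⟫) /
                  Real.sqrt
                    ((∑ k ∈ univ.erase (⟨0, hKpos⟩ : Fin K),
                        Real.exp ⟪Function.update θ k' v k, x⟫) ^ 2 +
                      ∑ k ∈ univ.erase (⟨0, hKpos⟩ : Fin K),
                        Real.exp ⟪Function.update θ k' v k, x⟫ ^ 2))) • x)
          (θ k') = 0) ↔
        (∑ k ∈ univ.erase (⟨0, hKpos⟩ : Fin K), Real.exp ⟪θ k, x⟫ ^ 2)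
          = (∑ k ∈ univ.erase (⟨0, hKpos⟩ : Fin K), Real.exp ⟪θ k, x⟫)
              * Real.exp ⟪θ k', x⟫) := by
    intro k' hk'
    have hk's : k' ∈ univ.erase (⟨0, hKpos⟩ : Fin K) := mem_erase.mpr ⟨hk', mem_univ k'⟩
    set C : ℝ := ∑ k ∈ (univ.erase (⟨0, hKpos⟩ : Fin K)).erase k', Real.exp ⟪θ k, x⟫ with hCdef
    set C2 : ℝ := ∑ k ∈ (univ.erase (⟨0, hKpos⟩ : Fin K)).erase k',
        Real.exp ⟪θ k, x⟫ ^ 2 with hC2def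
    have hC : 0 ≤ C := sum_nonneg fun k _ => (Real.exp_pos _).le
    have hC2 : 0 ≤ C2 := sum_nonneg fun k _ => (sq_nonneg _)
    have hsum1 : ∀ v : EuclideanSpace ℝ (Fin p),
        (∑ k ∈ univ.erase (⟨0, hKpos⟩ : Fin K),
          Real.exp ⟪Function.update θ k' v k, x⟫) = Real.exp ⟪v, x⟫ + C := by
      intro v
      rw [← Finset.add_sum_erase _ _ hk's, Function.update_self]
      congr 1
      exact Finset.sum_congr rfl fun k hk => by
        rw [Function.update_of_ne (mem_erase.mp hk).1]
    have hsum2 : ∀ v : EuclideanSpace ℝ (Fin p),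
        (∑ k ∈ univ.erase (⟨0, hKpos⟩ : Fin K),
          Real.exp ⟪Function.update θ k' v k, x⟫ ^ 2) = Real.exp ⟪v, x⟫ ^ 2 + C2 := by
      intro v
      rw [← Finset.add_sum_erase _ _ hk's, Function.update_self]
      congr 1
      exact Finset.sum_congr rfl fun k hk => by
        rw [Function.update_of_ne (mem_erase.mp hk).1]
    have hfun : (fun v : EuclideanSpace ℝ (Fin p) =>
            (-(B / ‖x‖) *
                ((∑ k ∈ univ.erase (⟨0, hKpos⟩ : Fin K),
                    Real.exp ⟪Function.update θ k' v k, x⟫) /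
                  Real.sqrt
                    ((∑ k ∈ univ.erase (⟨0, hKpos⟩ : Fin K),
                        Real.exp ⟪Function.update θ k' v k, x⟫) ^ 2 +
                      ∑ k ∈ univ.erase (⟨0, hKpos⟩ : Fin K),
                        Real.exp ⟪Function.update θ k' v k, x⟫ ^ 2))) • x)
        = (fun v : EuclideanSpace ℝ (Fin p) =>
            (-(B / ‖x‖) * ((Real.exp ⟪v, x⟫ + C) /
              Real.sqrt ((Real.exp ⟪v, x⟫ + C) ^ 2 + (Real.exp ⟪v, x⟫ ^ 2 + C2)))) • x) := by
      funext v
      rw [hsum1 v, hsum2 v]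
    have hw : 0 < (Real.exp ⟪θ k', x⟫ + C)^2 + (Real.exp ⟪θ k', x⟫ ^ 2 + C2) := by
      nlinarith [Real.exp_pos ⟪θ k', x⟫, sq_nonneg (Real.exp ⟪θ k', x⟫ + C)]
    have hd := deriv_g_aux (-(B / ‖x‖)) C C2 ⟪θ k', x⟫ hw
    have hF : HasFDerivAt (fun v : EuclideanSpace ℝ (Fin p) =>
            (-(B / ‖x‖) * ((Real.exp ⟪v, x⟫ + C) /
              Real.sqrt ((Real.exp ⟪v, x⟫ + C) ^ 2 + (Real.exp ⟪v, x⟫ ^ 2 + C2)))) • x)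
        ((((-(B / ‖x‖)) * (Real.exp ⟪θ k', x⟫ * (C2 - C * Real.exp ⟪θ k', x⟫) /
            Real.sqrt ((Real.exp ⟪θ k', x⟫ + C)^2 + (Real.exp ⟪θ k', x⟫ ^ 2 + C2)) ^ 3))
          • (innerSL ℝ x)).smulRight x) (θ k') :=
      hasFDerivAt_g_inner_smul p x (θ k')
        (fun t => -(B / ‖x‖) * ((Real.exp t + C) /
          Real.sqrt ((Real.exp t + C) ^ 2 + (Real.exp t ^ 2 + C2)))) _ hd
    rw [hfun, hF.fderiv, smul_map_eq_zero_iff p x hx]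
    have hS : 0 < Real.sqrt ((Real.exp ⟪θ k', x⟫ + C)^2 + (Real.exp ⟪θ k', x⟫ ^ 2 + C2)) :=
      Real.sqrt_pos.mpr hw
    have ha : -(B / ‖x‖) ≠ 0 := by
      have : 0 < B / ‖x‖ := div_pos hB hxn
      linarith
    have hE : 0 < Real.exp ⟪θ k', x⟫ := Real.exp_pos _
    have e1 : (∑ k ∈ univ.erase (⟨0, hKpos⟩ : Fin K), Real.exp ⟪θ k, x⟫ ^ 2)
        = Real.exp ⟪θ k', x⟫ ^ 2 + C2 := (Finset.add_sum_erase _ _ hk's).symm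
    have e2 : (∑ k ∈ univ.erase (⟨0, hKpos⟩ : Fin K), Real.exp ⟪θ k, x⟫)
        = Real.exp ⟪θ k', x⟫ + C := (Finset.add_sum_erase _ _ hk's).symm
    rw [e1, e2]
    rw [mul_eq_zero, div_eq_zero_iff, mul_eq_zero]
    constructor
    · rintro (h | (h | h) | h)
      · exact absurd h ha
      · exact absurd h hE.ne'
      · nlinarith [h]
      · exact absurd h (by positivity)
    · intro h
      right; left; right
      nlinarith [h]
  constructor
  · intro h k k' hk hk'
    have h1 := (key k hk).mp (h k hk)
    have h2 := (key k' hk').mp (h k' hk')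
    have hSs : 0 < ∑ j ∈ univ.erase (⟨0, hKpos⟩ : Fin K), Real.exp ⟪θ j, x⟫ :=
      Finset.sum_pos (fun i _ => Real.exp_pos _) ⟨_, hone⟩
    have heq : Real.exp ⟪θ k, x⟫ = Real.exp ⟪θ k', x⟫ :=
      mul_left_cancel₀ hSs.ne' (h1.symm.trans h2)
    exact Real.exp_eq_exp.mp heq
  · intro h k' hk'
    apply (key k' hk').mpr
    rw [Finset.sum_mul]
    exact Finset.sum_congr rfl fun k hk => by
      rw [sq, h k k' (mem_erase.mp hk).1 hk']
end
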